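/- A compact Hausdorff topological space carries a diffuse (atomless) regular Borel probability measure if and only if it contains a nonempty perfect subset. -/

import Mathlib

open MeasureTheory TopologicalSpace Set Filter
open scoped NNReal ENNReal Topology

namespace CHDiffuseAux

variable {X : Type*} [TopologicalSpace X] [CompactSpace X] [T2Space X]

/-- Splitting an open set meeting a preperfect set into two disjoint pieces. -/
lemma split {S : Set X} (hS : Preperfect S) {U : Set X} (hU : IsOpen U)
    (hne : (U ∩ S).Nonempty) :
    ∃ p : Set X × Set X, IsOpen p.1 ∧ IsOpen p.2 ∧ (p.1 ∩ S).Nonempty ∧ (p.2 ∩ S).Nonempty ∧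
      closure p.1 ⊆ U ∧ closure p.2 ⊆ U ∧ Disjoint (closure p.1) (closure p.2) := by
  obtain ⟨x, hxU, hxS⟩ := hne
  obtain ⟨y, ⟨hyU, hyS⟩, hyx⟩ := accPt_iff_nhds.1 (hS x hxS) U (hU.mem_nhds hxU)
  obtain ⟨Wx, Wy, hWx, hWy, hxW, hyW, hdisj⟩ := t2_separation hyx.symm
  obtain ⟨Cx, hCx_mem, hCx_closed, hCx_sub⟩ :=
    exists_mem_nhds_isClosed_subset ((hU.inter hWx).mem_nhds ⟨hxU, hxW⟩)
  obtain ⟨Cy, hCy_mem, hCy_closed, hCy_sub⟩ :=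
    exists_mem_nhds_isClosed_subset ((hU.inter hWy).mem_nhds ⟨hyU, hyW⟩)
  have hclx : closure (interior Cx) ⊆ U ∩ Wx :=
    (closure_minimal interior_subset hCx_closed).trans hCx_sub
  have hcly : closure (interior Cy) ⊆ U ∩ Wy :=
    (closure_minimal interior_subset hCy_closed).trans hCy_sub
  exact ⟨(interior Cx, interior Cy), isOpen_interior, isOpen_interior,
    ⟨x, mem_interior_iff_mem_nhds.2 hCx_mem, hxS⟩,
    ⟨y, mem_interior_iff_mem_nhds.2 hCy_mem, hyS⟩,
    hclx.trans inter_subset_left, hcly.trans inter_subset_left,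
    hdisj.mono (hclx.trans inter_subset_right) (hcly.trans inter_subset_right)⟩

variable (S : Set X)

/-- One splitting step, as a choice function. -/
noncomputable def step (hS : Preperfect S) (U : {U : Set X // IsOpen U ∧ (U ∩ S).Nonempty}) :
    Bool → {U : Set X // IsOpen U ∧ (U ∩ S).Nonempty}
  | false => ⟨(Classical.choose (split hS U.2.1 U.2.2)).1,
      (Classical.choose_spec (split hS U.2.1 U.2.2)).1,
      (Classical.choose_spec (split hS U.2.1 U.2.2)).2.2.1⟩
  | true => ⟨(Classical.choose (split hS U.2.1 U.2.2)).2,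
      (Classical.choose_spec (split hS U.2.1 U.2.2)).2.1,
      (Classical.choose_spec (split hS U.2.1 U.2.2)).2.2.2.1⟩

lemma step_closure (hS : Preperfect S) (U : {U : Set X // IsOpen U ∧ (U ∩ S).Nonempty}) :
    ∀ b, closure (step S hS U b).1 ⊆ U.1
  | false => (Classical.choose_spec (split hS U.2.1 U.2.2)).2.2.2.2.1
  | true => (Classical.choose_spec (split hS U.2.1 U.2.2)).2.2.2.2.2.1

lemma step_disjoint (hS : Preperfect S) (U : {U : Set X // IsOpen U ∧ (U ∩ S).Nonempty}) :
    Disjoint (closure (step S hS U false).1) (closure (step S hS U true).1) :=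
  (Classical.choose_spec (split hS U.2.1 U.2.2)).2.2.2.2.2.2

variable (hS : Preperfect S) (hne : S.Nonempty)

/-- The binary tree of open sets. -/
noncomputable def tree : (n : ℕ) → (Fin n → Bool) → {U : Set X // IsOpen U ∧ (U ∩ S).Nonempty}
  | 0, _ => ⟨Set.univ, isOpen_univ, by simpa using hne⟩
  | n+1, f => step S hS (tree n (f ∘ Fin.castSucc)) (f (Fin.last n))

lemma tree_succ_closure (n : ℕ) (f : Fin (n+1) → Bool) :
    closure (tree S hS hne (n+1) f).1 ⊆ (tree S hS hne n (f ∘ Fin.castSucc)).1 :=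
  step_closure S hS _ _

lemma tree_disjoint : ∀ n : ℕ, ∀ f g : Fin n → Bool, f ≠ g →
    Disjoint (closure (tree S hS hne n f).1) (closure (tree S hS hne n g).1) := by
  intro n
  induction n with
  | zero =>
    intro f g hfg
    exact absurd (funext fun i => i.elim0) hfg
  | succ n ih =>
    intro f g hfg
    by_cases hc : f ∘ Fin.castSucc = g ∘ Fin.castSucc
    · have hlast : f (Fin.last n) ≠ g (Fin.last n) := by
        intro h
        apply hfg
        funext i
        induction i using Fin.lastCases with
        | last => exact h
        | cast j => exact congrFun hc j
      show Disjoint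
        (closure (step S hS (tree S hS hne n (f ∘ Fin.castSucc)) (f (Fin.last n))).1)
        (closure (step S hS (tree S hS hne n (g ∘ Fin.castSucc)) (g (Fin.last n))).1)
      rw [← hc]
      rcases Bool.eq_false_or_eq_true (f (Fin.last n)) with hf | hf <;>
        rcases Bool.eq_false_or_eq_true (g (Fin.last n)) with hg | hg
      · exact absurd (hf.trans hg.symm) hlast
      · rw [hf, hg]; exact (step_disjoint S hS _).symm
      · rw [hf, hg]; exact step_disjoint S hS _
      · exact absurd (hf.trans hg.symm) hlast
    · exact (ih _ _ hc).mono
        ((tree_succ_closure S hS hne n f).trans subset_closure)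
        ((tree_succ_closure S hS hne n g).trans subset_closure)

lemma tree_anc : ∀ (n m : ℕ) (h : m ≤ n) (f : Fin n → Bool),
    (tree S hS hne n f).1 ⊆ (tree S hS hne m (fun i => f (Fin.castLE h i))).1 := by
  intro n
  induction n with
  | zero =>
    intro m h f
    interval_cases m
    have : (fun i => f (Fin.castLE le_rfl i)) = f := funext fun i => congrArg f (Fin.ext rfl)
    rw [this]
  | succ n ih =>
    intro m h f
    rcases eq_or_lt_of_le h with rfl | hlt
    · have : (fun i => f (Fin.castLE le_rfl i)) = f := funext fun i => congrArg f (Fin.ext rfl)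
      rw [this]
    · have h' : m ≤ n := Nat.lt_succ_iff.mp hlt
      have h1 : (tree S hS hne (n+1) f).1 ⊆ (tree S hS hne n (f ∘ Fin.castSucc)).1 :=
        subset_closure.trans (tree_succ_closure S hS hne n f)
      have h2 := ih m h' (f ∘ Fin.castSucc)
      have : (fun i => (f ∘ Fin.castSucc) (Fin.castLE h' i)) =
          (fun i => f (Fin.castLE h i)) := by
        funext i
        exact congrArg f (Fin.ext rfl)
      rw [this] at h2
      exact h1.trans h2

/-- Chosen point in each node. -/
noncomputable def pt (n : ℕ) (f : Fin n → Bool) : X :=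
  ((tree S hS hne n f).2.2).choose

lemma pt_mem (n : ℕ) (f : Fin n → Bool) : pt S hS hne n f ∈ (tree S hS hne n f).1 :=
  ((tree S hS hne n f).2.2).choose_spec.1

lemma pt_mem_closure_anc {m n : ℕ} (h : m ≤ n) (f : Fin n → Bool) :
    pt S hS hne n f ∈ closure (tree S hS hne m (fun i => f (Fin.castLE h i))).1 :=
  subset_closure (tree_anc S hS hne n m h f (pt_mem S hS hne n f))

/-- Counting function. -/
noncomputable def cnt (n : ℕ) (A : Set X) : ℕ :=
  Set.ncard {f : Fin n → Bool | pt S hS hne n f ∈ A}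

lemma cnt_mono (n : ℕ) {A B : Set X} (h : A ⊆ B) : cnt S hS hne n A ≤ cnt S hS hne n B :=
  Set.ncard_le_ncard (fun f hf => h hf) (Set.toFinite _)

lemma cnt_union_le (n : ℕ) (A B : Set X) :
    cnt S hS hne n (A ∪ B) ≤ cnt S hS hne n A + cnt S hS hne n B := by
  have : {f : Fin n → Bool | pt S hS hne n f ∈ A ∪ B} =
      {f | pt S hS hne n f ∈ A} ∪ {f | pt S hS hne n f ∈ B} := by
    ext f; simp [Set.mem_union]
  rw [cnt, this]
  exact Set.ncard_union_le _ _

lemma cnt_union_eq (n : ℕ) {A B : Set X} (h : Disjoint A B) :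
    cnt S hS hne n (A ∪ B) = cnt S hS hne n A + cnt S hS hne n B := by
  have heq : {f : Fin n → Bool | pt S hS hne n f ∈ A ∪ B} =
      {f | pt S hS hne n f ∈ A} ∪ {f | pt S hS hne n f ∈ B} := by
    ext f; simp [Set.mem_union]
  have hd : Disjoint {f : Fin n → Bool | pt S hS hne n f ∈ A}
      {f | pt S hS hne n f ∈ B} := by
    rw [Set.disjoint_left]
    intro f hfA hfB
    exact Set.disjoint_left.1 h hfA hfB
  rw [cnt, heq, Set.ncard_union_eq hd (Set.toFinite _) (Set.toFinite _)]
  rfl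

lemma cnt_univ (n : ℕ) : cnt S hS hne n Set.univ = 2 ^ n := by
  have : {f : Fin n → Bool | pt S hS hne n f ∈ Set.univ} = Set.univ := by
    ext f; simp
  rw [cnt, this, Set.ncard_univ, Nat.card_eq_fintype_card]
  simp

lemma cnt_le_of_unique {A : Set X} {m n : ℕ} (h : m ≤ n) (s₀ : Fin m → Bool)
    (hA : ∀ s : Fin m → Bool, (A ∩ closure (tree S hS hne m s).1).Nonempty → s = s₀) :
    cnt S hS hne n A ≤ 2 ^ (n - m) := by
  have key : ∀ f : Fin n → Bool, pt S hS hne n f ∈ A →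
      (fun i => f (Fin.castLE h i)) = s₀ := by
    intro f hf
    exact hA _ ⟨pt S hS hne n f, hf, pt_mem_closure_anc S hS hne h f⟩
  calc cnt S hS hne n A
      ≤ Set.ncard (Set.univ : Set (Fin (n - m) → Bool)) := by
        apply Set.ncard_le_ncard_of_injOn
          (fun f (i : Fin (n - m)) => f ⟨m + i.1, by have := i.isLt; omega⟩)
        · intro f _; trivial
        · intro f hf g hg htail
          have hf' := key f hf
          have hg' := key g hg
          funext i
          rcases lt_or_ge i.1 m with hi | hi
          · have e1 : f i = s₀ ⟨i.1, hi⟩ := by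
              have := congrFun hf' ⟨i.1, hi⟩
              simpa [Fin.castLE] using this
            have e2 : g i = s₀ ⟨i.1, hi⟩ := by
              have := congrFun hg' ⟨i.1, hi⟩
              simpa [Fin.castLE] using this
            rw [e1, e2]
          · have hin := i.isLt
            have := congrFun htail ⟨i.1 - m, by omega⟩
            simp only at this
            have hidx : (⟨m + (i.1 - m), by have := i.isLt; omega⟩ : Fin n) = i :=
              Fin.ext (by simp only [Fin.val_mk]; omega)
            rwa [hidx] at this
    _ = 2 ^ (n - m) := by
        rw [Set.ncard_univ, Nat.card_eq_fintype_card]; simp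

/-- Normalized counting sequence. -/
noncomputable def seq (n : ℕ) (A : Set X) : ℝ≥0 :=
  (cnt S hS hne n A : ℝ≥0) / 2 ^ n

lemma seq_le_one (n : ℕ) (A : Set X) : seq S hS hne n A ≤ 1 := by
  rw [seq, div_le_one (by positivity)]
  have h := cnt_mono S hS hne n (Set.subset_univ A)
  rw [cnt_univ S hS hne n] at h
  exact_mod_cast h

lemma seq_mono (n : ℕ) {A B : Set X} (h : A ⊆ B) :
    seq S hS hne n A ≤ seq S hS hne n B := by
  apply div_le_div_of_nonneg_right ?_ (by positivity)
  exact_mod_cast cnt_mono S hS hne n h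

lemma seq_union_le (n : ℕ) (A B : Set X) :
    seq S hS hne n (A ∪ B) ≤ seq S hS hne n A + seq S hS hne n B := by
  rw [seq, seq, seq, ← add_div]
  apply div_le_div_of_nonneg_right ?_ (by positivity)
  exact_mod_cast cnt_union_le S hS hne n A B

lemma seq_union_eq (n : ℕ) {A B : Set X} (h : Disjoint A B) :
    seq S hS hne n (A ∪ B) = seq S hS hne n A + seq S hS hne n B := by
  rw [seq, seq, seq, ← add_div, cnt_union_eq S hS hne n h]
  push_cast
  ring_nf

lemma seq_univ (n : ℕ) : seq S hS hne n Set.univ = 1 := by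
  rw [seq, cnt_univ]
  push_cast
  rw [div_self (by positivity)]

variable (𝒰 : Ultrafilter ℕ)

lemma exists_lim (A : Set X) :
    ∃ a : ℝ≥0, Tendsto (fun n => seq S hS hne n A) 𝒰 (𝓝 a) := by
  have hmem : ∀ n, seq S hS hne n A ∈ Set.Icc (0 : ℝ≥0) 1 := fun n =>
    ⟨zero_le, seq_le_one S hS hne n A⟩
  have hle : ↑(𝒰.map (fun n => seq S hS hne n A)) ≤ 𝓟 (Set.Icc (0 : ℝ≥0) 1) := by
    rw [Ultrafilter.coe_map, Filter.le_principal_iff, Filter.mem_map]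
    exact Filter.univ_mem' hmem
  obtain ⟨a, -, ha⟩ := isCompact_Icc.ultrafilter_le_nhds
    (𝒰.map (fun n => seq S hS hne n A)) hle
  exact ⟨a, by rwa [Ultrafilter.coe_map] at ha⟩

/-- The limiting value along the ultrafilter. -/
noncomputable def nval (A : Set X) : ℝ≥0 :=
  @limUnder _ _ _ ⟨(exists_lim S hS hne 𝒰 A).choose⟩ 𝒰 (fun n => seq S hS hne n A)

lemma nval_tendsto (A : Set X) :
    Tendsto (fun n => seq S hS hne n A) 𝒰 (𝓝 (nval S hS hne 𝒰 A)) :=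
  tendsto_nhds_limUnder (exists_lim S hS hne 𝒰 A)

lemma nval_mono {A B : Set X} (h : A ⊆ B) : nval S hS hne 𝒰 A ≤ nval S hS hne 𝒰 B :=
  le_of_tendsto_of_tendsto' (nval_tendsto S hS hne 𝒰 A) (nval_tendsto S hS hne 𝒰 B)
    (fun n => seq_mono S hS hne n h)

lemma nval_union_le (A B : Set X) :
    nval S hS hne 𝒰 (A ∪ B) ≤ nval S hS hne 𝒰 A + nval S hS hne 𝒰 B :=
  le_of_tendsto_of_tendsto' (nval_tendsto S hS hne 𝒰 (A ∪ B))
    ((nval_tendsto S hS hne 𝒰 A).add (nval_tendsto S hS hne 𝒰 B))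
    (fun n => seq_union_le S hS hne n A B)

lemma nval_union_eq {A B : Set X} (h : Disjoint A B) :
    nval S hS hne 𝒰 (A ∪ B) = nval S hS hne 𝒰 A + nval S hS hne 𝒰 B := by
  apply tendsto_nhds_unique (nval_tendsto S hS hne 𝒰 (A ∪ B))
  have := (nval_tendsto S hS hne 𝒰 A).add (nval_tendsto S hS hne 𝒰 B)
  apply this.congr
  intro n
  exact (seq_union_eq S hS hne n h).symm

lemma nval_univ : nval S hS hne 𝒰 Set.univ = 1 := by
  apply tendsto_nhds_unique (nval_tendsto S hS hne 𝒰 Set.univ)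
  have : (fun n => seq S hS hne n Set.univ) = fun _ => (1 : ℝ≥0) :=
    funext fun n => seq_univ S hS hne n
  rw [this]
  exact tendsto_const_nhds

lemma nval_le_of_unique (h𝒰 : ↑𝒰 ≤ (atTop : Filter ℕ)) {A : Set X} {m : ℕ} (s₀ : Fin m → Bool)
    (hA : ∀ s : Fin m → Bool, (A ∩ closure (tree S hS hne m s).1).Nonempty → s = s₀) :
    nval S hS hne 𝒰 A ≤ (2 ^ m : ℝ≥0)⁻¹ := by
  apply le_of_tendsto (nval_tendsto S hS hne 𝒰 A)
  have hev : ∀ᶠ n in (atTop : Filter ℕ), m ≤ n := eventually_ge_atTop m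
  apply (hev.filter_mono h𝒰).mono
  intro n hn
  have hcnt := cnt_le_of_unique S hS hne hn s₀ hA
  have h1 : seq S hS hne n A ≤ (2 : ℝ≥0) ^ (n - m) / 2 ^ n := by
    apply div_le_div_of_nonneg_right ?_ (by positivity)
    exact_mod_cast hcnt
  have h2 : (2 : ℝ≥0) ^ (n - m) / 2 ^ n = (2 ^ m : ℝ≥0)⁻¹ := by
    have hn' : (2 : ℝ≥0) ^ n = 2 ^ (n - m) * 2 ^ m := by
      rw [← pow_add, Nat.sub_add_cancel hn]
    rw [div_eq_mul_inv, hn', mul_inv, ← mul_assoc,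
      mul_inv_cancel₀ (by positivity : (0:ℝ≥0) < 2 ^ (n - m)).ne', one_mul]
  rw [h2] at h1
  exact h1

/-- The content built from the limiting values. -/
noncomputable def cont (h𝒰 : ↑𝒰 ≤ (atTop : Filter ℕ)) : Content X where
  toFun K := nval S hS hne 𝒰 K
  mono' K₁ K₂ h := nval_mono S hS hne 𝒰 h
  sup_disjoint' K₁ K₂ hd _ _ := by
    have := nval_union_eq S hS hne 𝒰 hd
    simpa using this
  sup_le' K₁ K₂ := by
    have := nval_union_le S hS hne 𝒰 K₁ K₂
    simpa using this

end CHDiffuseAux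

open CHDiffuseAux

/-- A compact Hausdorff topological space carries a diffuse (atomless) regular Borel
probability measure if and only if it contains a nonempty perfect subset. -/
theorem compact_hausdorff_exists_diffuse_regular_prob_iff_perfect
    (X : Type*) [TopologicalSpace X] [CompactSpace X] [T2Space X]
    [MeasurableSpace X] [BorelSpace X] :
    (∃ μ : Measure X, IsProbabilityMeasure μ ∧ μ.Regular ∧ ∀ x : X, μ {x} = 0) ↔
      (∃ S : Set X, S.Nonempty ∧ Perfect S) := by
  constructor
  · rintro ⟨μ, hprob, hreg, hdiff⟩
    set S : Set X := {x : X | ∀ U : Set X, IsOpen U → x ∈ U → μ U ≠ 0} with hSdef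
    have hScompl : Sᶜ = ⋃ i : {U : Set X // IsOpen U ∧ μ U = 0}, i.1 := by
      ext x
      simp only [hSdef, Set.mem_compl_iff, Set.mem_setOf_eq, Set.mem_iUnion, not_forall]
      constructor
      · rintro ⟨U, hU, hx, h0⟩
        exact ⟨⟨U, hU, not_not.mp h0⟩, hx⟩
      · rintro ⟨⟨U, hU, h0⟩, hx⟩
        exact ⟨U, hU, hx, not_not.mpr h0⟩
    have hSclosed : IsClosed S := by
      rw [← isOpen_compl_iff, hScompl]
      exact isOpen_iUnion fun i => i.2.1
    have hScompl_open : IsOpen Sᶜ := by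
      rw [hScompl]; exact isOpen_iUnion fun i => i.2.1
    have hScompl_null : μ Sᶜ = 0 := by
      by_contra h0
      obtain ⟨K, hKsub, hKc, hKpos⟩ :=
        hreg.innerRegular hScompl_open 0 (pos_iff_ne_zero.mpr h0)
      have hcover : K ⊆ ⋃ i : {U : Set X // IsOpen U ∧ μ U = 0}, i.1 := by
        rwa [← hScompl]
      obtain ⟨t, ht⟩ := hKc.elim_finite_subcover
        (fun i : {U : Set X // IsOpen U ∧ μ U = 0} => i.1) (fun i => i.2.1) hcover
      have : μ K = 0 := by
        apply le_antisymm _ zero_le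
        calc μ K ≤ ∑ i ∈ t, μ i.1 := (measure_mono ht).trans (measure_biUnion_finset_le t _)
          _ = 0 := Finset.sum_eq_zero fun i _ => i.2.2
      rw [this] at hKpos
      exact lt_irrefl _ hKpos
    have hSne : S.Nonempty := by
      apply nonempty_of_measure_ne_zero (μ := μ)
      intro h0
      have h1 : (1 : ℝ≥0∞) = μ Set.univ := hprob.measure_univ.symm
      have h2 : μ Set.univ ≤ μ S + μ Sᶜ := by
        rw [← Set.union_compl_self S]
        exact measure_union_le _ _
      rw [h0, hScompl_null, add_zero] at h2
      exact absurd (h1 ▸ h2) (by norm_num)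
    refine ⟨S, hSne, hSclosed, ?_⟩
    intro x hx
    rw [accPt_iff_nhds]
    intro U hU
    by_contra hcon
    push_neg at hcon
    obtain ⟨V, hVU, hVopen, hxV⟩ := mem_nhds_iff.mp hU
    have hV0 : μ V ≠ 0 := hx V hVopen hxV
    apply hV0
    have hVsub : V ⊆ Sᶜ ∪ {x} := by
      intro y hy
      by_cases hyS : y ∈ S
      · right
        exact hcon y ⟨hVU hy, hyS⟩
      · left; exact hyS
    apply le_antisymm _ zero_le
    calc μ V ≤ μ (Sᶜ ∪ {x}) := measure_mono hVsub
      _ ≤ μ Sᶜ + μ {x} := measure_union_le _ _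
      _ = 0 := by rw [hScompl_null, hdiff x, add_zero]
  · rintro ⟨S, hne, hperf⟩
    have hS : Preperfect S := hperf.acc
    set 𝒰 : Ultrafilter ℕ := Ultrafilter.of atTop with h𝒰def
    have h𝒰 : ↑𝒰 ≤ (atTop : Filter ℕ) := Ultrafilter.of_le _
    set C : Content X := cont S hS hne 𝒰 h𝒰 with hCdef
    have hCval : ∀ K : Compacts X, C.toFun K = nval S hS hne 𝒰 K := fun _ => rfl
    refine ⟨C.measure, ?_, inferInstance, ?_⟩
    · constructor
      rw [Content.measure_apply _ MeasurableSet.univ]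
      have h1 : C.outerMeasure Set.univ = C.innerContent ⊤ := by
        have := Content.outerMeasure_opens C ⊤
        simpa using this
      rw [h1]
      apply le_antisymm
      · apply iSup₂_le
        intro K _
        rw [show C K = (C.toFun K : ℝ≥0∞) from rfl, hCval]
        calc (nval S hS hne 𝒰 ↑K : ℝ≥0∞) ≤ (nval S hS hne 𝒰 Set.univ : ℝ≥0∞) := by
              exact_mod_cast nval_mono S hS hne 𝒰 (Set.subset_univ _)
          _ = 1 := by rw [nval_univ]; simp
      · have hle : (1 : ℝ≥0∞) ≤ C ⟨Set.univ, isCompact_univ⟩ := by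
          rw [show C ⟨Set.univ, isCompact_univ⟩ = (C.toFun ⟨Set.univ, isCompact_univ⟩ : ℝ≥0∞) from rfl, hCval]
          have : nval S hS hne 𝒰 (Set.univ : Set X) = 1 := nval_univ S hS hne 𝒰
          simp [this]
        refine le_trans hle ?_
        exact le_iSup₂_of_le ⟨Set.univ, isCompact_univ⟩ (by simp) le_rfl
    · intro x
      rw [Content.measure_apply _ (measurableSet_singleton x)]
      have key : ∀ m : ℕ, C.outerMeasure {x} ≤ ((2 ^ m : ℝ≥0)⁻¹ : ℝ≥0∞) := by
        intro m
        set B : Set X := ⋃ s : {s : Fin m → Bool // x ∉ closure (tree S hS hne m s).1},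
          closure (tree S hS hne m s.1).1 with hBdef
        have hBclosed : IsClosed B :=
          isClosed_iUnion_of_finite fun s => isClosed_closure
        have hxB : x ∉ B := by
          rw [hBdef]
          simp only [Set.mem_iUnion]
          rintro ⟨⟨s, hs⟩, hmem⟩
          exact hs hmem
        have hUopen : IsOpen Bᶜ := hBclosed.isOpen_compl
        have hxU : x ∈ Bᶜ := hxB
        have h2 : C.outerMeasure {x} ≤ C.outerMeasure Bᶜ :=
          C.outerMeasure.mono (Set.singleton_subset_iff.mpr hxU)
        have h3 : C.outerMeasure Bᶜ = C.innerContent ⟨Bᶜ, hUopen⟩ :=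
          Content.outerMeasure_opens C ⟨Bᶜ, hUopen⟩
        refine h2.trans (h3.le.trans ?_)
        apply iSup₂_le
        intro K hK
        rw [show C K = (C.toFun K : ℝ≥0∞) from rfl, hCval]
        have hs₀ : ∃ s₀ : Fin m → Bool,
            ∀ s : Fin m → Bool, ((K : Set X) ∩ closure (tree S hS hne m s).1).Nonempty →
              s = s₀ := by
          by_cases hx : ∃ s : Fin m → Bool, x ∈ closure (tree S hS hne m s).1
          · obtain ⟨s₀, hs₀⟩ := hx
            refine ⟨s₀, fun s hsK => ?_⟩
            have hxs : x ∈ closure (tree S hS hne m s).1 := by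
              by_contra hxs
              obtain ⟨y, hyK, hyc⟩ := hsK
              have : y ∈ B := Set.mem_iUnion.mpr ⟨⟨s, hxs⟩, hyc⟩
              exact (hK hyK) this
            by_contra hss
            exact Set.disjoint_left.1 (tree_disjoint S hS hne m s s₀ hss) hxs hs₀
              |>.elim
          · push_neg at hx
            refine ⟨fun _ => false, fun s hsK => ?_⟩
            exfalso
            obtain ⟨y, hyK, hyc⟩ := hsK
            have : y ∈ B := Set.mem_iUnion.mpr ⟨⟨s, hx s⟩, hyc⟩
            exact (hK hyK) this
        obtain ⟨s₀, hs₀⟩ := hs₀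
        have := nval_le_of_unique S hS hne 𝒰 h𝒰 s₀ hs₀
        rw [← ENNReal.coe_inv (by positivity : (0:ℝ≥0) < 2 ^ m).ne']
        exact ENNReal.coe_le_coe.2 this
      have htend : Tendsto (fun m : ℕ => ((2 ^ m : ℝ≥0)⁻¹ : ℝ≥0∞)) atTop (𝓝 0) := by
        have : ∀ m : ℕ, (((2 ^ m : ℝ≥0) : ℝ≥0∞))⁻¹ = (2 : ℝ≥0∞)⁻¹ ^ m := by
          intro m
          rw [ENNReal.coe_pow, ← ENNReal.inv_pow]
          norm_num
        simp_rw [this]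
        exact ENNReal.tendsto_pow_atTop_nhds_zero_of_lt_one
          (by rw [ENNReal.inv_lt_one]; norm_num)
      have := ge_of_tendsto' htend key
      exact le_antisymm this zero_le
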